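/- With the setup of the masked value-difference identity, if the π-weighted sum of advantages over the pruned actions is nonpositive, i.e., ∑_a (1 − E(a)) π(a)(Q(a) − V) ≤ 0, then the masked policy's expected value satisfies ∑_a π_E(a) Q(a) ≥ V = ∑_a π(a) Q(a). -/
import Mathlib


open Finset

theorem masked_value_improvement
    {A : Type*} [Fintype A] [Nonempty A]
    (π E Q : A → ℝ)
    (hπ0 : ∀ a, 0 ≤ π a) (hπ1 : ∑ a, π a = 1)
    (hE : ∀ a, E a = 0 ∨ E a = 1)
    (hZ : 0 < ∑ a, π a * E a)
    (hadv : ∑ a, (1 - E a) * π a * (Q a - ∑ a', π a' * Q a') ≤ 0) :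
    (∑ a, π a * Q a) ≤ ∑ a, (π a * E a / (∑ a', π a' * E a')) * Q a := by
  set V := ∑ a', π a' * Q a' with hV
  set Z := ∑ a', π a' * E a' with hZd
  have expand : ∑ a, (1 - E a) * π a * (Q a - V)
      = (V - V * 1) - (∑ a, π a * E a * Q a - V * Z) := by
    have h : ∀ a, (1 - E a) * π a * (Q a - V)
        = (π a * Q a - V * π a) - (π a * E a * Q a - V * (π a * E a)) := fun a => by ring
    simp_rw [h, Finset.sum_sub_distrib, ← Finset.mul_sum, ← hZd, ← hV, hπ1]
  have key : V * Z ≤ ∑ a, π a * E a * Q a := by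
    rw [expand] at hadv
    linarith
  have hrw : ∑ a, (π a * E a / Z) * Q a = (∑ a, π a * E a * Q a) / Z := by
    rw [Finset.sum_div]
    apply Finset.sum_congr rfl
    intro a _
    ring
  rw [hrw, le_div_iff₀ hZ]
  exact key
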